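/- Let f : ℝ^d → ℝ be twice differentiable with μ·I ⪯ ∇²f(θ) for all θ, M-Lipschitz Hessian, and let θ* be a k*-sparse minimizer with ∇f(θ*) = 0. Define the top-k Newton iteration θ_{t+1} = T_k(θ_t − H_t^{-1}∇f(θ_t)) with H_t = ∇²f(θ_t) and k ≥ k*. Then ‖θ_{t+1} − θ*‖₂ ≤ (1 + √(k*/k)) · (M/(2μ)) · ‖θ_t − θ*‖₂². -/

import Mathlib

set_option maxHeartbeats 1000000

open scoped RealInnerProductSpace

/-- `IsTopKWith Q k u t` : `t` is obtained from `u` by keeping the coordinates in `Q`,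
a set of `k` coordinates of largest absolute value of `u`, and zeroing out the rest. -/
def IsTopKWith {d : ℕ} (Q : Finset (Fin d)) (k : ℕ) (u t : Fin d → ℝ) : Prop :=
  Q.card = k ∧ (∀ i, t i = if i ∈ Q then u i else 0) ∧
    ∀ i ∈ Q, ∀ j ∉ Q, |u j| ≤ |u i|

/-- `t` is a top-`k` approximation `T_k(u)` of `u`. -/
def IsTopK {d : ℕ} (k : ℕ) (u t : Fin d → ℝ) : Prop :=
  ∃ Q : Finset (Fin d), IsTopKWith Q k u t


lemma newton_est {d : ℕ} (μ M : ℝ) (hμ : 0 < μ)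
    (f' : EuclideanSpace ℝ (Fin d) → EuclideanSpace ℝ (Fin d))
    (f'' : EuclideanSpace ℝ (Fin d) → EuclideanSpace ℝ (Fin d) →L[ℝ] EuclideanSpace ℝ (Fin d))
    (hhess : ∀ x, HasFDerivAt f' (f'' x) x)
    (hstrong : ∀ x v, μ * ‖v‖ ^ 2 ≤ ⟪v, f'' x v⟫)
    (hlip : ∀ x y, ‖f'' x - f'' y‖ ≤ M * ‖x - y‖)
    (θs : EuclideanSpace ℝ (Fin d)) (hθs : f' θs = 0)
    (θt u : EuclideanSpace ℝ (Fin d)) (hu : f'' θt u = f' θt) :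
    ‖θt - u - θs‖ ≤ M / (2 * μ) * ‖θt - θs‖ ^ 2 := by
  set e : EuclideanSpace ℝ (Fin d) := θt - θs with he
  set c := f'' θt with hc
  set φ : ℝ → EuclideanSpace ℝ (Fin d) := fun s => f' (θs + s • e) - s • (c e) with hφ
  set g : ℝ → EuclideanSpace ℝ (Fin d) := fun s => f'' (θs + s • e) e - c e with hg
  have hderiv : ∀ s : ℝ, HasDerivAt φ (g s) s := by
    intro s
    have h1 : HasDerivAt (fun s : ℝ => θs + s • e) e s := by
      simpa using ((hasDerivAt_id s).smul_const e).const_add θs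
    have h2 : HasDerivAt (fun s : ℝ => f' (θs + s • e)) (f'' (θs + s • e) e) s :=
      (hhess (θs + s • e)).comp_hasDerivAt s h1
    have h3 : HasDerivAt (fun s : ℝ => s • (c e)) (c e) s := by
      simpa using (hasDerivAt_id s).smul_const (c e)
    exact h2.sub h3
  have hl : LipschitzWith (Real.toNNReal M) f'' :=
    LipschitzWith.of_dist_le_mul fun x y => by
      rw [dist_eq_norm, dist_eq_norm]
      exact le_trans (hlip x y)
        (mul_le_mul_of_nonneg_right (Real.le_coe_toNNReal M) (norm_nonneg _))
  have hgcont : Continuous g := by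
    have hc1 : Continuous fun s : ℝ => f'' (θs + s • e) :=
      hl.continuous.comp (continuous_const.add (continuous_id.smul continuous_const))
    exact (((ContinuousLinearMap.apply ℝ (EuclideanSpace ℝ (Fin d)) e).continuous).comp
      hc1).sub continuous_const
  have hint : (∫ s in (0:ℝ)..1, g s) = φ 1 - φ 0 :=
    intervalIntegral.integral_eq_sub_of_hasDerivAt (fun s _ => hderiv s)
      (hgcont.intervalIntegrable 0 1)
  have hφ1 : φ 1 = f' θt - c e := by simp [hφ, he]
  have hφ0 : φ 0 = 0 := by simp [hφ, hθs]
  have hbound : ∀ s ∈ Set.Icc (0:ℝ) 1, ‖g s‖ ≤ M * ‖e‖ ^ 2 * (1 - s) := by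
    intro s hs
    have h1 : ‖f'' (θs + s • e) - c‖ ≤ M * ((1 - s) * ‖e‖) := by
      have h0 := hlip (θs + s • e) θt
      have heq : θs + s • e - θt = -((1-s) • e) := by
        rw [he]; module
      rw [heq, norm_neg, norm_smul, Real.norm_eq_abs,
        abs_of_nonneg (by linarith [hs.2] : (0:ℝ) ≤ 1 - s)] at h0
      exact h0
    calc ‖g s‖ = ‖(f'' (θs + s • e) - c) e‖ := by
          simp only [hg, ContinuousLinearMap.sub_apply]
      _ ≤ ‖f'' (θs + s • e) - c‖ * ‖e‖ := (f'' (θs + s • e) - c).le_opNorm e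
      _ ≤ M * ((1 - s) * ‖e‖) * ‖e‖ := mul_le_mul_of_nonneg_right h1 (norm_nonneg _)
      _ = M * ‖e‖ ^ 2 * (1 - s) := by ring
  have hintbound : ‖∫ s in (0:ℝ)..1, g s‖ ≤ M * ‖e‖ ^ 2 * (1/2) := by
    have h1 : ‖∫ s in (0:ℝ)..1, g s‖ ≤ ∫ s in (0:ℝ)..1, ‖g s‖ :=
      intervalIntegral.norm_integral_le_integral_norm (by norm_num)
    have h2 : (∫ s in (0:ℝ)..1, ‖g s‖) ≤ ∫ s in (0:ℝ)..1, M * ‖e‖ ^ 2 * (1 - s) := by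
      apply intervalIntegral.integral_mono_on (by norm_num)
      · exact (hgcont.norm.intervalIntegrable 0 1)
      · exact ((continuous_const.mul (continuous_const.sub continuous_id)).intervalIntegrable 0 1)
      · exact hbound
    have h3 : (∫ s in (0:ℝ)..1, M * ‖e‖ ^ 2 * (1 - s)) = M * ‖e‖ ^ 2 * (1/2) := by
      rw [intervalIntegral.integral_const_mul]
      congr 1
      have hsub : (∫ s in (0:ℝ)..1, (1 - s)) =
          (∫ _ in (0:ℝ)..1, (1:ℝ)) - ∫ s in (0:ℝ)..1, s :=
        intervalIntegral.integral_sub intervalIntegrable_const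
          ((continuous_id'.intervalIntegrable 0 1))
      rw [hsub]
      simp
      norm_num
    calc ‖∫ s in (0:ℝ)..1, g s‖ ≤ _ := h1
      _ ≤ _ := h2
      _ = _ := h3
  have hkey : ‖f' θt - c e‖ ≤ M / 2 * ‖e‖ ^ 2 := by
    rw [hint, hφ1, hφ0, sub_zero] at hintbound
    linarith [hintbound]
  have hrhs0 : 0 ≤ M / 2 * ‖e‖ ^ 2 := le_trans (norm_nonneg _) hkey
  set w : EuclideanSpace ℝ (Fin d) := θt - u - θs with hw
  have hcw : c w = c e - f' θt := by
    have hwe : w = e - u := by rw [hw, he]; abel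
    rw [hwe, map_sub, hu]
  have hcwn : ‖c w‖ ≤ M / 2 * ‖e‖ ^ 2 := by
    rw [hcw, show c e - f' θt = -(f' θt - c e) by abel, norm_neg]
    exact hkey
  have hsc : μ * ‖w‖ ^ 2 ≤ ‖w‖ * ‖c w‖ :=
    le_trans (hstrong θt w) (real_inner_le_norm w (c w))
  have hfin : M / (2 * μ) * ‖e‖ ^ 2 = (M / 2 * ‖e‖ ^ 2) / μ := by
    field_simp
  rcases eq_or_lt_of_le (norm_nonneg w) with h0 | h0
  · rw [← h0, hfin]
    exact div_nonneg hrhs0 hμ.le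
  · have h1 : μ * ‖w‖ ≤ ‖c w‖ := by
      have h2 : μ * ‖w‖ * ‖w‖ ≤ ‖c w‖ * ‖w‖ := by
        calc μ * ‖w‖ * ‖w‖ = μ * ‖w‖ ^ 2 := by ring
          _ ≤ ‖w‖ * ‖c w‖ := hsc
          _ = ‖c w‖ * ‖w‖ := by ring
      exact le_of_mul_le_mul_right h2 h0
    rw [hfin, le_div_iff₀ hμ]
    linarith


lemma esumsq {d : ℕ} (x : EuclideanSpace ℝ (Fin d)) : ‖x‖ ^ 2 = ∑ i, x i ^ 2 := by
  rw [EuclideanSpace.norm_eq, Real.sq_sqrt (by positivity)]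
  exact Finset.sum_congr rfl fun i _ => by rw [Real.norm_eq_abs, sq_abs]

lemma hsum_ite {d : ℕ} (S : Finset (Fin d)) (a : Fin d → ℝ) :
    (∑ i, (if i ∈ S then a i else 0) ^ 2) = ∑ i ∈ S, a i ^ 2 := by
  rw [← Finset.sum_filter_add_sum_filter_not Finset.univ (· ∈ S)]
  have e1 : (∑ i ∈ Finset.univ.filter (· ∈ S), (if i ∈ S then a i else 0) ^ 2)
      = ∑ i ∈ Finset.univ.filter (· ∈ S), a i ^ 2 :=
    Finset.sum_congr rfl fun i hi => by rw [if_pos (Finset.mem_filter.mp hi).2]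
  have e2 : (∑ i ∈ Finset.univ.filter (¬ · ∈ S), (if i ∈ S then a i else 0) ^ 2) = 0 :=
    Finset.sum_eq_zero fun i hi => by rw [if_neg (Finset.mem_filter.mp hi).2]; ring
  rw [e1, e2, add_zero, Finset.filter_univ_mem]

lemma topk_dist {d : ℕ} (k kstar : ℕ) (hk : kstar ≤ k)
    (v θs t : EuclideanSpace ℝ (Fin d))
    (hsupp : (Function.support fun i => θs i).ncard ≤ kstar)
    (ht : IsTopK k (fun i => v i) (fun i => t i)) :
    ‖t - θs‖ ≤ (1 + Real.sqrt ((kstar : ℝ) / k)) * ‖v - θs‖ := by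
  obtain ⟨Q, hQcard, hQval0, hQmax0⟩ := ht
  have hQval : ∀ i, t i = if i ∈ Q then v i else 0 := hQval0
  have hQmax : ∀ i ∈ Q, ∀ j ∉ Q, |v j| ≤ |v i| := hQmax0
  set Qs : Finset (Fin d) := Finset.univ.filter (fun i => θs i ≠ 0) with hQs
  have hθs0 : ∀ i ∉ Qs, θs i = 0 := by
    intro i hi
    by_contra h
    exact hi (Finset.mem_filter.mpr ⟨Finset.mem_univ i, h⟩)
  have hQscard : Qs.card ≤ kstar := by
    have hset : (Qs : Set (Fin d)) = Function.support fun i => θs i := by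
      ext i
      simp [hQs, Function.mem_support]
    have h2 : Qs.card = (Function.support fun i => θs i).ncard := by
      rw [← hset, Set.ncard_coe_finset]
    omega
  set R : Finset (Fin d) := Qs \ Q with hR
  set P : Finset (Fin d) := Q ∪ Qs with hP
  set w1 : EuclideanSpace ℝ (Fin d) := WithLp.toLp 2 (fun i => if i ∈ P then v i - θs i else 0) with hw1
  set w2 : EuclideanSpace ℝ (Fin d) := WithLp.toLp 2 (fun i => if i ∈ R then v i else 0) with hw2
  have hdecomp : t - θs = w1 - w2 := by
    ext i
    have h1 : (t - θs) i = t i - θs i := rfl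
    have h2 : (w1 - w2) i = w1 i - w2 i := rfl
    rw [h1, h2, hQval i]
    by_cases hiQ : i ∈ Q
    · have hiP : i ∈ P := Finset.mem_union_left _ hiQ
      have hiR : i ∉ R := fun h => ((Finset.mem_sdiff.mp h).2 hiQ).elim
      simp [hw1, hw2, hiQ, hiP, hiR]
    · by_cases hiQs : i ∈ Qs
      · have hiP : i ∈ P := Finset.mem_union_right _ hiQs
        have hiR : i ∈ R := Finset.mem_sdiff.mpr ⟨hiQs, hiQ⟩
        simp [hw1, hw2, hiQ, hiP, hiR]
      · have hiP : i ∉ P := by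
          rw [hP, Finset.mem_union]; tauto
        have hiR : i ∉ R := fun h => hiQs (Finset.mem_sdiff.mp h).1
        simp [hw1, hw2, hiQ, hiP, hiR, hθs0 i hiQs]
  have hvθ : ∀ i, (v - θs) i = v i - θs i := fun i => rfl
  have hnormsq : ‖v - θs‖ ^ 2 = ∑ i, (v i - θs i) ^ 2 := by
    rw [esumsq]
    exact Finset.sum_congr rfl fun i _ => by rw [hvθ i]
  -- ‖w1‖ ≤ ‖v - θs‖
  have hw1le : ‖w1‖ ≤ ‖v - θs‖ := by
    apply le_of_pow_le_pow_left₀ two_ne_zero (norm_nonneg _)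
    rw [esumsq, hnormsq]
    calc (∑ i, w1 i ^ 2) = ∑ i ∈ P, (v i - θs i) ^ 2 := hsum_ite P _
      _ ≤ ∑ i, (v i - θs i) ^ 2 :=
          Finset.sum_le_sum_of_subset_of_nonneg (Finset.subset_univ P)
            (fun i _ _ => sq_nonneg _)
  -- main combinatorial bound
  have hB : (∑ j ∈ Q \ Qs, v j ^ 2) ≤ ‖v - θs‖ ^ 2 := by
    rw [hnormsq]
    calc (∑ j ∈ Q \ Qs, v j ^ 2) = ∑ j ∈ Q \ Qs, (v j - θs j) ^ 2 := by
          apply Finset.sum_congr rfl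
          intro j hj
          rw [hθs0 j (Finset.mem_sdiff.mp hj).2, sub_zero]
      _ ≤ ∑ i, (v i - θs i) ^ 2 :=
          Finset.sum_le_sum_of_subset_of_nonneg (Finset.subset_univ _)
            (fun i _ _ => sq_nonneg _)
  have hmain : (∑ i ∈ R, v i ^ 2) ≤ ((kstar : ℝ) / k) * ‖v - θs‖ ^ 2 := by
    rcases Finset.eq_empty_or_nonempty R with hRe | hRne
    · rw [hRe, Finset.sum_empty]
      positivity
    · set s : ℕ := (Q ∩ Qs).card with hs
      set r : ℕ := R.card with hrc
      have hQsplit : (Q \ Qs).card + s = k := by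
        rw [hs, Finset.card_sdiff_add_card_inter, hQcard]
      have hQssplit : r + s = Qs.card := by
        have h := Finset.card_sdiff_add_card_inter Qs Q
        rw [hrc, hR, hs, Finset.inter_comm Q Qs]
        exact h
      have hrpos : 0 < r := Finset.card_pos.mpr hRne
      have hslt : s < k := by
        omega
      -- per-j bound
      have hperj : ∀ j ∈ Q \ Qs, (∑ i ∈ R, v i ^ 2) ≤ (r : ℝ) * v j ^ 2 := by
        intro j hj
        have hjQ : j ∈ Q := (Finset.mem_sdiff.mp hj).1
        have : ∀ i ∈ R, v i ^ 2 ≤ v j ^ 2 := by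
          intro i hi
          have hiQ : i ∉ Q := (Finset.mem_sdiff.mp hi).2
          have habs : |v i| ≤ |v j| := hQmax j hjQ i hiQ
          calc v i ^ 2 = |v i| ^ 2 := (sq_abs _).symm
            _ ≤ |v j| ^ 2 := by
                exact pow_le_pow_left₀ (abs_nonneg _) habs 2
            _ = v j ^ 2 := sq_abs _
        calc (∑ i ∈ R, v i ^ 2) ≤ ∑ _i ∈ R, v j ^ 2 := Finset.sum_le_sum this
          _ = (r : ℝ) * v j ^ 2 := by rw [Finset.sum_const, nsmul_eq_mul, hrc]
      set A : ℝ := ∑ i ∈ R, v i ^ 2 with hA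
      set B : ℝ := ∑ j ∈ Q \ Qs, v j ^ 2 with hBdef
      have hA0 : 0 ≤ A := Finset.sum_nonneg fun i _ => sq_nonneg _
      have hB0 : 0 ≤ B := Finset.sum_nonneg fun i _ => sq_nonneg _
      have hsummed : ((Q \ Qs).card : ℝ) * A ≤ (r : ℝ) * B := by
        have := Finset.sum_le_sum hperj
        rw [Finset.sum_const, nsmul_eq_mul] at this
        calc ((Q \ Qs).card : ℝ) * A ≤ (∑ _j ∈ Q \ Qs, A) := by
              rw [Finset.sum_const, nsmul_eq_mul]
          _ ≤ ∑ j ∈ Q \ Qs, (r : ℝ) * v j ^ 2 := Finset.sum_le_sum hperj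
          _ = (r : ℝ) * B := by rw [← Finset.mul_sum]
      have hcQ : ((Q \ Qs).card : ℝ) = (k : ℝ) - s := by
        have : (Q \ Qs).card = k - s := by omega
        rw [this]
        push_cast [Nat.cast_sub (by omega : s ≤ k)]
        ring
      rw [hcQ] at hsummed
      have hrle : (r : ℝ) ≤ (kstar : ℝ) - s := by
        have : r + s ≤ kstar := by omega
        have h2 : (r : ℝ) + s ≤ kstar := by exact_mod_cast this
        linarith
      have hks : (kstar : ℝ) ≤ k := by exact_mod_cast hk
      have hsk : (s : ℝ) < k := by exact_mod_cast hslt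
      have hs0 : (0 : ℝ) ≤ s := by positivity
      have hkA : (k : ℝ) * A ≤ (kstar : ℝ) * B := by
        have hkpos : (0 : ℝ) < k := lt_of_le_of_lt hs0 hsk
        have p1 : (k : ℝ) * (((k : ℝ) - s) * A) ≤ (k : ℝ) * (((r : ℝ)) * B) :=
          mul_le_mul_of_nonneg_left hsummed hkpos.le
        have p2 : (k : ℝ) * ((r : ℝ) * B) ≤ (k : ℝ) * (((kstar : ℝ) - s) * B) := by
          apply mul_le_mul_of_nonneg_left _ hkpos.le
          exact mul_le_mul_of_nonneg_right hrle hB0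
        have p3 : (k : ℝ) * (((kstar : ℝ) - s) * B) ≤ (kstar : ℝ) * (((k : ℝ) - s) * B) := by
          nlinarith [mul_nonneg hs0 hB0]
        have p4 : ((k : ℝ) * A) * ((k : ℝ) - s) ≤ ((kstar : ℝ) * B) * ((k : ℝ) - s) := by
          nlinarith
        exact le_of_mul_le_mul_right p4 (by linarith)
      have hkpos : (0 : ℝ) < k := lt_of_le_of_lt hs0 hsk
      have hstep : A ≤ (kstar : ℝ) / k * B := by
        rw [div_mul_eq_mul_div, le_div_iff₀ hkpos]
        linarith
      calc A ≤ (kstar : ℝ) / k * B := hstep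
        _ ≤ (kstar : ℝ) / k * ‖v - θs‖ ^ 2 :=
            mul_le_mul_of_nonneg_left hB (by positivity)
  have hw2le : ‖w2‖ ≤ Real.sqrt ((kstar : ℝ) / k) * ‖v - θs‖ := by
    apply le_of_pow_le_pow_left₀ two_ne_zero (by positivity)
    rw [esumsq, mul_pow, Real.sq_sqrt (by positivity : (0:ℝ) ≤ (kstar : ℝ) / k)]
    calc (∑ i, w2 i ^ 2) = ∑ i ∈ R, v i ^ 2 := hsum_ite R _
      _ ≤ ((kstar : ℝ) / k) * ‖v - θs‖ ^ 2 := hmain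
  calc ‖t - θs‖ = ‖w1 - w2‖ := by rw [hdecomp]
    _ ≤ ‖w1‖ + ‖w2‖ := norm_sub_le _ _
    _ ≤ ‖v - θs‖ + Real.sqrt ((kstar : ℝ) / k) * ‖v - θs‖ := add_le_add hw1le hw2le
    _ = (1 + Real.sqrt ((kstar : ℝ) / k)) * ‖v - θs‖ := by ring

/-- Quadratic local convergence of the top-`k` Newton (I-OBS/Top-k) iteration: if `f` is
twice differentiable with `μ·I ⪯ ∇²f`, `M`-Lipschitz Hessian, `θ*` is a `k*`-sparse
point with `∇f(θ*) = 0`, and `θ_{t+1} = T_k(θ_t − H_t⁻¹∇f(θ_t))` with `k ≥ k*`, then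
`‖θ_{t+1} − θ*‖ ≤ (1 + √(k*/k)) (M/(2μ)) ‖θ_t − θ*‖²`. -/
theorem topk_newton_convergence {d : ℕ} (μ M : ℝ) (hμ : 0 < μ)
    (f : EuclideanSpace ℝ (Fin d) → ℝ)
    (f' : EuclideanSpace ℝ (Fin d) → EuclideanSpace ℝ (Fin d))
    (f'' : EuclideanSpace ℝ (Fin d) → EuclideanSpace ℝ (Fin d) →L[ℝ] EuclideanSpace ℝ (Fin d))
    (hgrad : ∀ x, HasGradientAt f (f' x) x)
    (hhess : ∀ x, HasFDerivAt f' (f'' x) x)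
    (hstrong : ∀ x v, μ * ‖v‖ ^ 2 ≤ ⟪v, f'' x v⟫)
    (hlip : ∀ x y, ‖f'' x - f'' y‖ ≤ M * ‖x - y‖)
    (kstar k : ℕ) (hk : kstar ≤ k)
    (θs : EuclideanSpace ℝ (Fin d)) (hθs : f' θs = 0)
    (hsparse : (Function.support fun i => θs i).ncard ≤ kstar)
    (θt u θnext : EuclideanSpace ℝ (Fin d)) (hu : f'' θt u = f' θt)
    (hnext : IsTopK k (fun i => θt i - u i) (fun i => θnext i)) :
    ‖θnext - θs‖ ≤ (1 + Real.sqrt ((kstar : ℝ) / k)) * (M / (2 * μ)) * ‖θt - θs‖ ^ 2 := by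
  have h1 : ‖θnext - θs‖ ≤ (1 + Real.sqrt ((kstar : ℝ) / k)) * ‖(θt - u) - θs‖ :=
    topk_dist k kstar hk (θt - u) θs θnext hsparse hnext
  have h2 : ‖θt - u - θs‖ ≤ M / (2 * μ) * ‖θt - θs‖ ^ 2 :=
    newton_est μ M hμ f' f'' hhess hstrong hlip θs hθs θt u hu
  calc ‖θnext - θs‖ ≤ (1 + Real.sqrt ((kstar : ℝ) / k)) * ‖θt - u - θs‖ := h1
    _ ≤ (1 + Real.sqrt ((kstar : ℝ) / k)) * (M / (2 * μ) * ‖θt - θs‖ ^ 2) :=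
        mul_le_mul_of_nonneg_left h2 (by positivity)
    _ = (1 + Real.sqrt ((kstar : ℝ) / k)) * (M / (2 * μ)) * ‖θt - θs‖ ^ 2 := by ring
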